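/- Let Z be a tail of a nodal curve C with k_Z ≥ 4. Then there do not exist Z-terminal tails W ∈ T²_{i,j} and W' ∈ T³_{i,j} such that Z ⊆ W ∧ W' and #(Term_{W'} ∩ Term_Z) = 2. -/

import Mathlib

open Set

/- Dual multigraph model of a nodal curve: vertices `V` are irreducible
components, edges `E` are nodes, with endpoint maps `s t : E → V`. -/

/-- The set of terminal points (edges of the cut) of a vertex subset `Z`. -/
def TermPts {V E : Type} (s t : E → V) (Z : Set V) : Set E :=
  {e | (s e ∈ Z ∧ t e ∉ Z) ∨ (t e ∈ Z ∧ s e ∉ Z)}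

/-- A subcurve is a nonempty proper subset of the components. -/
def Subcurve {V : Type} (Z : Set V) : Prop := Z.Nonempty ∧ Z ≠ Set.univ

/-- Connectivity of the induced sub-multigraph on `Z`. -/
def ConnOn {V E : Type} (s t : E → V) (Z : Set V) : Prop :=
  ∀ x ∈ Z, ∀ y ∈ Z,
    Relation.ReflTransGen
      (fun a b => a ∈ Z ∧ b ∈ Z ∧ ∃ e, (s e = a ∧ t e = b) ∨ (s e = b ∧ t e = a)) x y

/-- A tail is a subcurve with both sides connected. -/
def IsTail {V E : Type} (s t : E → V) (Z : Set V) : Prop :=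
  Subcurve Z ∧ ConnOn s t Z ∧ ConnOn s t Zᶜ

/-- `k_Z`, the number of terminal points of `Z`. -/
noncomputable def kcut {V E : Type} (s t : E → V) (Z : Set V) : ℕ :=
  (TermPts s t Z).ncard

/-- The pair `(Z, Z')` is free if the edge cuts are disjoint. -/
def FreePair {V E : Type} (s t : E → V) (Z Z' : Set V) : Prop :=
  TermPts s t Z ∩ TermPts s t Z' = ∅

/-- The pair `(Z, Z')` is perfect. -/
def PerfectPair {V : Type} (Z Z' : Set V) : Prop :=
  Z ⊆ Z' ∨ Z' ⊆ Z ∨ Zᶜ ⊆ Z' ∨ Z' ⊆ Zᶜ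
/-- `S²_{i,j}`: the 2-tails containing `vi, vj` and omitting `v1`. -/
def S2set {V E : Type} (s t : E → V) (v1 vi vj : V) : Set (Set V) :=
  {Z | IsTail s t Z ∧ kcut s t Z = 2 ∧ vi ∈ Z ∧ vj ∈ Z ∧ v1 ∉ Z}

/-- The levels of the inductive construction of the set of nested tails:
level `0` is `S` itself, and level `m+1` consists of the members `Z` of `S`
with `W_m ◁ Z`, where `W_m` is the intersection of the members of level `m`. -/
def Tlevel {V E : Type} (s t : E → V) (S : Set (Set V)) : ℕ → Set (Set V)
  | 0 => S
  | (m + 1) =>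
      {Z | Z ∈ S ∧ ⋂₀ Tlevel s t S m ⊂ Z ∧ FreePair s t (⋂₀ Tlevel s t S m) Z}

/-- The set of nested tails extracted from `S`: the tails `W_m = ⋂ (level m)`
for all `m` with level `m` nonempty. -/
def Tset {V E : Type} (s t : E → V) (S : Set (Set V)) : Set (Set V) :=
  {X | ∃ m, (Tlevel s t S m).Nonempty ∧ X = ⋂₀ Tlevel s t S m}

/-- `T²_{i,j}`, the set of nested 2-tails with respect to `(i, j)`. -/
def T2set {V E : Type} (s t : E → V) (v1 vi vj : V) : Set (Set V) :=
  Tset s t (S2set s t v1 vi vj)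

/-- `S³_{i,j}`: the `T²_{i,j}`-free 3-tails containing `vi, vj`, omitting `v1`. -/
def S3set {V E : Type} (s t : E → V) (v1 vi vj : V) : Set (Set V) :=
  {Z | IsTail s t Z ∧ kcut s t Z = 3 ∧ vi ∈ Z ∧ vj ∈ Z ∧ v1 ∉ Z ∧
        ∀ W ∈ T2set s t v1 vi vj, FreePair s t Z W}

/-- `T³_{i,j}`, the set of nested 3-tails with respect to `(i, j)`. -/
def T3set {V E : Type} (s t : E → V) (v1 vi vj : V) : Set (Set V) :=
  Tset s t (S3set s t v1 vi vj)
section Aux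
set_option linter.unusedSectionVars false

variable {V E : Type} [Fintype V] [Fintype E] {s t : E → V}

/-- Edges between two vertex sets. -/
def btw (s t : E → V) (X Y : Set V) : Set E :=
  {e | (s e ∈ X ∧ t e ∈ Y) ∨ (s e ∈ Y ∧ t e ∈ X)}

lemma mem_btw {X Y : Set V} {e : E} :
    e ∈ btw s t X Y ↔ (s e ∈ X ∧ t e ∈ Y) ∨ (s e ∈ Y ∧ t e ∈ X) := Iff.rfl

lemma mem_TermPts {Z : Set V} {e : E} :
    e ∈ TermPts s t Z ↔ (s e ∈ Z ∧ t e ∉ Z) ∨ (t e ∈ Z ∧ s e ∉ Z) := Iff.rfl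

lemma btw_comm (X Y : Set V) : btw s t X Y = btw s t Y X := by
  ext e; rw [mem_btw, mem_btw]; tauto

lemma btw_mono {X X' Y Y' : Set V} (hX : X ⊆ X') (hY : Y ⊆ Y') :
    btw s t X Y ⊆ btw s t X' Y' := by
  rintro e (⟨h1, h2⟩ | ⟨h1, h2⟩)
  · exact Or.inl ⟨hX h1, hY h2⟩
  · exact Or.inr ⟨hY h1, hX h2⟩

lemma btw_subset_TermPts {X Y Z : Set V} (hX : X ⊆ Z) (hY : ∀ y ∈ Y, y ∉ Z) :
    btw s t X Y ⊆ TermPts s t Z := by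
  rintro e (⟨h1, h2⟩ | ⟨h1, h2⟩)
  · exact Or.inl ⟨hX h1, hY _ h2⟩
  · exact Or.inr ⟨hX h2, hY _ h1⟩

lemma btw_subset_TermPts' {X Y Z : Set V} (hY : Y ⊆ Z) (hX : ∀ x ∈ X, x ∉ Z) :
    btw s t X Y ⊆ TermPts s t Z := by
  rintro e (⟨h1, h2⟩ | ⟨h1, h2⟩)
  · exact Or.inr ⟨hY h2, hX _ h1⟩
  · exact Or.inl ⟨hY h1, hX _ h2⟩

/-- In a connected set `S`, if `U` has a point in `S` and `S` has a point outside `U`,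
there is an edge of `S` crossing `U`. -/
lemma lemE {S U : Set V} (hconn : ConnOn s t S) {x y : V}
    (hxS : x ∈ S) (hx : x ∈ U) (hyS : y ∈ S) (hy : y ∉ U) :
    ∃ e, e ∈ btw s t (S ∩ U) (S \ U) := by
  have h := hconn x hxS y hyS
  clear hxS
  induction h using Relation.ReflTransGen.head_induction_on with
  | refl => exact absurd hx hy
  | head hrel _ ih =>
    rename_i a c _
    obtain ⟨haS, hcS, e, he⟩ := hrel
    by_cases hcU : c ∈ U
    · exact ih hcU
    · refine ⟨e, ?_⟩
      rcases he with ⟨hs, ht⟩ | ⟨hs, ht⟩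
      · exact Or.inl ⟨⟨hs ▸ haS, hs ▸ hx⟩, ⟨ht ▸ hcS, ht ▸ hcU⟩⟩
      · exact Or.inr ⟨⟨hs ▸ hcS, hs ▸ hcU⟩, ⟨ht ▸ haS, ht ▸ hx⟩⟩

/-- Connectivity of a subset all of whose internal boundary edges emanate
from the single vertex `u0`. -/
lemma lemC {B U : Set V} (hB : ConnOn s t B) (hUB : U ⊆ B) (u0 : V)
    (h1 : ∀ e, s e ∈ B → t e ∈ B → ((s e ∈ U ∧ t e ∉ U) → s e = u0) ∧
      ((t e ∈ U ∧ s e ∉ U) → t e = u0)) :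
    ConnOn s t U := by
  intro x hx y hy
  set r := fun a b => a ∈ U ∧ b ∈ U ∧ ∃ e, (s e = a ∧ t e = b) ∨ (s e = b ∧ t e = a)
    with hr
  have key : ∀ a, a ∈ B → Relation.ReflTransGen
      (fun a b => a ∈ B ∧ b ∈ B ∧ ∃ e, (s e = a ∧ t e = b) ∨ (s e = b ∧ t e = a)) a y →
      (a ∈ U → Relation.ReflTransGen r a y) ∧
      (a ∉ U → Relation.ReflTransGen r u0 y) := by
    intro a haB h
    clear haB
    induction h using Relation.ReflTransGen.head_induction_on with
    | refl =>
      refine ⟨fun _ => .refl, fun hyU => absurd hy hyU⟩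
    | head hrel _ ih =>
      rename_i a c _
      obtain ⟨haB, hcB, e, he⟩ := hrel
      constructor
      · intro haU
        by_cases hcU : c ∈ U
        · exact .head ⟨haU, hcU, e, he⟩ (ih.1 hcU)
        · have hau0 : a = u0 := by
            rcases he with ⟨hs, ht⟩ | ⟨hs, ht⟩
            · exact hs ▸ (h1 e (hs ▸ haB) (ht ▸ hcB)).1 ⟨hs ▸ haU, ht ▸ hcU⟩
            · exact ht ▸ (h1 e (hs ▸ hcB) (ht ▸ haB)).2 ⟨ht ▸ haU, hs ▸ hcU⟩
          exact hau0 ▸ (ih.2 hcU)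
      · intro haU
        by_cases hcU : c ∈ U
        · have hcu0 : c = u0 := by
            rcases he with ⟨hs, ht⟩ | ⟨hs, ht⟩
            · exact ht ▸ (h1 e (hs ▸ haB) (ht ▸ hcB)).2 ⟨ht ▸ hcU, hs ▸ haU⟩
            · exact hs ▸ (h1 e (hs ▸ hcB) (ht ▸ haB)).1 ⟨hs ▸ hcU, ht ▸ haU⟩
          exact hcu0 ▸ (ih.1 hcU)
        · exact ih.2 hcU
  exact (key x (hUB hx) (hB x (hUB hx) y (hUB hy))).1 hx

/-- A subset with a unique internal crossing edge of its ambient connected set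
is connected. -/
lemma lemC' {B U : Set V} (hB : ConnOn s t B) (hUB : U ⊆ B) (e0 : E)
    (huniq : ∀ e, s e ∈ B → t e ∈ B →
      ((s e ∈ U ∧ t e ∉ U) ∨ (t e ∈ U ∧ s e ∉ U)) → e = e0) :
    ConnOn s t U := by
  by_cases h0 : s e0 ∈ U
  · refine lemC hB hUB (s e0) (fun e hs ht => ⟨?_, ?_⟩) <;> intro hcross
    · have := huniq e hs ht (Or.inl hcross); rw [this]
    · have := huniq e hs ht (Or.inr hcross)
      subst this
      exact absurd h0 hcross.2
  · refine lemC hB hUB (t e0) (fun e hs ht => ⟨?_, ?_⟩) <;> intro hcross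
    · have := huniq e hs ht (Or.inl hcross)
      subst this
      exact absurd hcross.1 h0
    · have := huniq e hs ht (Or.inr hcross); rw [this]

lemma lemUnion {A B : Set V} (hA : ConnOn s t A) (hB : ConnOn s t B) {x0 : V}
    (hx0 : x0 ∈ A ∩ B) : ConnOn s t (A ∪ B) := by
  have mono : ∀ (C : Set V), C ⊆ A ∪ B → ∀ x y : V,
      Relation.ReflTransGen
        (fun a b => a ∈ C ∧ b ∈ C ∧ ∃ e, (s e = a ∧ t e = b) ∨ (s e = b ∧ t e = a)) x y →
      Relation.ReflTransGen
        (fun a b => a ∈ A ∪ B ∧ b ∈ A ∪ B ∧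
          ∃ e, (s e = a ∧ t e = b) ∨ (s e = b ∧ t e = a)) x y := by
    intro C hC x y h
    induction h with
    | refl => exact .refl
    | tail _ hr ih => exact .tail ih ⟨hC hr.1, hC hr.2.1, hr.2.2⟩
  rintro x (hx | hx) y (hy | hy)
  · exact mono A subset_union_left _ _ (hA x hx y hy)
  · exact .trans (mono A subset_union_left _ _ (hA x hx x0 hx0.1))
      (mono B subset_union_right _ _ (hB x0 hx0.2 y hy))
  · exact .trans (mono B subset_union_right _ _ (hB x hx x0 hx0.2))
      (mono A subset_union_left _ _ (hA x0 hx0.1 y hy))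
  · exact mono B subset_union_right _ _ (hB x hx y hy)

/-- Splitting a 2-element set into two nonempty disjoint subsets. -/
lemma split2 {T1 T2 S : Set E} (h1 : T1 ⊆ S) (h2 : T2 ⊆ S) (hd : T1 ∩ T2 = ∅)
    (hS : S.ncard = 2) (hne1 : T1.Nonempty) (hne2 : T2.Nonempty) :
    T1.ncard = 1 ∧ T2.ncard = 1 ∧ T1 ∪ T2 = S := by
  have hu : (T1 ∪ T2).ncard = T1.ncard + T2.ncard :=
    Set.ncard_union_eq (Set.disjoint_iff_inter_eq_empty.mpr hd)
  have hle : (T1 ∪ T2).ncard ≤ 2 := hS ▸ Set.ncard_le_ncard (union_subset h1 h2)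
  have p1 : 0 < T1.ncard := (Set.ncard_pos (Set.toFinite _)).mpr hne1
  have p2 : 0 < T2.ncard := (Set.ncard_pos (Set.toFinite _)).mpr hne2
  refine ⟨by omega, by omega, Set.eq_of_subset_of_ncard_le (union_subset h1 h2) (by omega)⟩

lemma empty_of_disj {T1 T2 T3 S : Set E} (hU : T1 ∪ T2 = S) (h3 : T3 ⊆ S)
    (d1 : T3 ∩ T1 = ∅) (d2 : T3 ∩ T2 = ∅) : T3 = ∅ := by
  rw [Set.eq_empty_iff_forall_notMem]
  intro e he
  rcases hU ▸ h3 he with h | h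
  · have : e ∈ T3 ∩ T1 := ⟨he, h⟩
    rw [d1] at this; exact this
  · have : e ∈ T3 ∩ T2 := ⟨he, h⟩
    rw [d2] at this; exact this

end Aux
section Uncross
set_option linter.unusedSectionVars false
variable {V E : Type} [Fintype V] [Fintype E] {s t : E → V} {v1 vi vj : V}

lemma regions_cover {A B : Set V} {v : V} :
    v ∈ A ∩ B ∨ v ∈ A \ B ∨ v ∈ B \ A ∨ v ∈ (A ∪ B)ᶜ := by
  simp only [mem_inter_iff, mem_diff, mem_compl_iff, mem_union]; tauto

set_option maxHeartbeats 1000000 in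
/-- Main S2 uncrossing: intersecting crossing 2-tails gives a 2-tail. -/
lemma uncross2 {A B : Set V} (hA : A ∈ S2set s t v1 vi vj) (hB : B ∈ S2set s t v1 vi vj)
    (hAB : ¬ A ⊆ B) (hBA : ¬ B ⊆ A) : A ∩ B ∈ S2set s t v1 vi vj := by
  obtain ⟨⟨⟨hAne, hAnu⟩, hAconn, hAcc⟩, hkA, hviA, hvjA, hv1A⟩ := hA
  obtain ⟨⟨⟨hBne, hBnu⟩, hBconn, hBcc⟩, hkB, hviB, hvjB, hv1B⟩ := hB
  obtain ⟨p, hpA, hpB⟩ := Set.not_subset.mp hAB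
  obtain ⟨q, hqB, hqA⟩ := Set.not_subset.mp hBA
  -- the six boundary edge sets
  set EUP := btw s t (A ∩ B) (A \ B) with hEUP
  set EUQ := btw s t (A ∩ B) (B \ A) with hEUQ
  set EUR := btw s t (A ∩ B) (A ∪ B)ᶜ with hEUR
  set EPQ := btw s t (A \ B) (B \ A) with hEPQ
  set EPR := btw s t (A \ B) (A ∪ B)ᶜ with hEPR
  set EQR := btw s t (B \ A) (A ∪ B)ᶜ with hEQR
  -- nonemptiness
  have hEUPne : EUP.Nonempty := by
    obtain ⟨e, he⟩ := lemE (S := A) (U := A ∩ B) hAconn hviA ⟨hviA, hviB⟩ hpA (fun h => hpB h.2)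
    have hsub : A \ (A ∩ B) ⊆ A \ B := fun x hx => ⟨hx.1, fun h => hx.2 ⟨hx.1, h⟩⟩
    exact ⟨e, btw_mono (fun x hx => hx.2) hsub he⟩
  have hEUQne : EUQ.Nonempty := by
    obtain ⟨e, he⟩ := lemE (S := B) (U := A ∩ B) hBconn hviB ⟨hviA, hviB⟩ hqB (fun h => hqA h.1)
    have hsub : B \ (A ∩ B) ⊆ B \ A := fun x hx => ⟨hx.1, fun h => hx.2 ⟨h, hx.1⟩⟩
    exact ⟨e, btw_mono (fun x hx => hx.2) hsub he⟩
  have hEPRne : EPR.Nonempty := by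
    obtain ⟨e, he⟩ := lemE (S := Bᶜ) (U := A \ B) hBcc hpB ⟨hpA, hpB⟩ hv1B (fun h => hv1A h.1)
    refine ⟨e, btw_mono (fun x hx => hx.2) (fun x hx => ?_) he⟩
    rcases hx with ⟨hx1, hx2⟩
    intro hmem
    rcases hmem with h | h
    · exact hx2 ⟨h, hx1⟩
    · exact hx1 h
  have hEQRne : EQR.Nonempty := by
    obtain ⟨e, he⟩ := lemE (S := Aᶜ) (U := B \ A) hAcc hqA ⟨hqB, hqA⟩ hv1A (fun h => hv1B h.1)
    refine ⟨e, btw_mono (fun x hx => hx.2) (fun x hx => ?_) he⟩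
    rcases hx with ⟨hx1, hx2⟩
    intro hmem
    rcases hmem with h | h
    · exact hx1 h
    · exact hx2 ⟨h, hx1⟩
  -- subsets of the two cuts
  have hUQ_A : EUQ ⊆ TermPts s t A := btw_subset_TermPts (fun x hx => hx.1) (fun y hy => hy.2)
  have hPR_A : EPR ⊆ TermPts s t A :=
    btw_subset_TermPts (fun x hx => hx.1) (fun y hy h => hy (Or.inl h))
  have hUR_A : EUR ⊆ TermPts s t A :=
    btw_subset_TermPts (fun x hx => hx.1) (fun y hy h => hy (Or.inl h))
  have hPQ_A : EPQ ⊆ TermPts s t A := btw_subset_TermPts (fun x hx => hx.1) (fun y hy => hy.2)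
  have hUP_B : EUP ⊆ TermPts s t B := btw_subset_TermPts (fun x hx => hx.2) (fun y hy => hy.2)
  have hQR_B : EQR ⊆ TermPts s t B :=
    btw_subset_TermPts (fun x hx => hx.1) (fun y hy h => hy (Or.inr h))
  -- disjointness
  have dUQ_PR : EUQ ∩ EPR = ∅ := by
    rw [Set.eq_empty_iff_forall_notMem]; rintro e ⟨h1, h2⟩
    rw [hEUQ, mem_btw] at h1; rw [hEPR, mem_btw] at h2
    simp only [mem_inter_iff, mem_diff, mem_compl_iff, mem_union] at h1 h2; tauto
  have dUP_QR : EUP ∩ EQR = ∅ := by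
    rw [Set.eq_empty_iff_forall_notMem]; rintro e ⟨h1, h2⟩
    rw [hEUP, mem_btw] at h1; rw [hEQR, mem_btw] at h2
    simp only [mem_inter_iff, mem_diff, mem_compl_iff, mem_union] at h1 h2; tauto
  have dUR_UQ : EUR ∩ EUQ = ∅ := by
    rw [Set.eq_empty_iff_forall_notMem]; rintro e ⟨h1, h2⟩
    rw [hEUR, mem_btw] at h1; rw [hEUQ, mem_btw] at h2
    simp only [mem_inter_iff, mem_diff, mem_compl_iff, mem_union] at h1 h2; tauto
  have dUR_PR : EUR ∩ EPR = ∅ := by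
    rw [Set.eq_empty_iff_forall_notMem]; rintro e ⟨h1, h2⟩
    rw [hEUR, mem_btw] at h1; rw [hEPR, mem_btw] at h2
    simp only [mem_inter_iff, mem_diff, mem_compl_iff, mem_union] at h1 h2; tauto
  -- counts from the cut of A and of B
  have hkA' : (TermPts s t A).ncard = 2 := hkA
  have hkB' : (TermPts s t B).ncard = 2 := hkB
  obtain ⟨ncUQ, ncPR, hcutA⟩ := split2 hUQ_A hPR_A dUQ_PR hkA' hEUQne hEPRne
  obtain ⟨ncUP, ncQR, hcutB⟩ := split2 hUP_B hQR_B dUP_QR hkB' hEUPne hEQRne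
  have hURe : EUR = ∅ := empty_of_disj hcutA hUR_A dUR_UQ dUR_PR
  -- the cut of the intersection
  have hcutI : TermPts s t (A ∩ B) = EUP ∪ EUQ ∪ EUR := by
    rw [hEUP, hEUQ, hEUR]
    ext e
    by_cases hsA : s e ∈ A <;> by_cases hsB : s e ∈ B <;>
      by_cases htA : t e ∈ A <;> by_cases htB : t e ∈ B <;>
      simp [mem_TermPts, mem_btw, mem_union, mem_inter_iff, mem_diff, mem_compl_iff,
        hsA, hsB, htA, htB]
  have dUP_UQ : EUP ∩ EUQ = ∅ := by
    rw [Set.eq_empty_iff_forall_notMem]; rintro e ⟨h1, h2⟩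
    rw [hEUP, mem_btw] at h1; rw [hEUQ, mem_btw] at h2
    simp only [mem_inter_iff, mem_diff, mem_compl_iff, mem_union] at h1 h2; tauto
  have hkI : (TermPts s t (A ∩ B)).ncard = 2 := by
    rw [hcutI, hURe, union_empty,
      Set.ncard_union_eq (Set.disjoint_iff_inter_eq_empty.mpr dUP_UQ), ncUP, ncUQ]
  -- connectivity of the intersection
  obtain ⟨e0, he0⟩ := Set.ncard_eq_one.mp ncUQ
  have hIconn : ConnOn s t (A ∩ B) := by
    refine lemC' hBconn (fun x hx => hx.2) e0 (fun e hsB htB hcr => ?_)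
    have hmem : e ∈ EUQ := by
      rw [hEUQ, mem_btw]
      rcases hcr with ⟨h1, h2⟩ | ⟨h1, h2⟩
      · exact Or.inl ⟨h1, ⟨htB, fun hA' => h2 ⟨hA', htB⟩⟩⟩
      · exact Or.inr ⟨⟨hsB, fun hA' => h2 ⟨hA', hsB⟩⟩, h1⟩
    rw [he0] at hmem; exact hmem
  have hIcc : ConnOn s t (A ∩ B)ᶜ := by
    rw [Set.compl_inter]
    exact lemUnion hAcc hBcc (x0 := v1) ⟨hv1A, hv1B⟩
  have hInu : A ∩ B ≠ univ := by
    intro h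
    have : v1 ∈ A ∩ B := h.symm ▸ mem_univ v1
    exact hv1A this.1
  exact ⟨⟨⟨⟨vi, hviA, hviB⟩, hInu⟩, hIconn, hIcc⟩, hkI, ⟨hviA, hviB⟩, ⟨hvjA, hvjB⟩,
    fun h => hv1A h.1⟩

end Uncross
section Closure
set_option linter.unusedSectionVars false
variable {V E : Type} [Fintype V] [Fintype E] {s t : E → V} {v1 vi vj : V}

lemma Tlevel_subset (S : Set (Set V)) (m : ℕ) : Tlevel s t S m ⊆ S := by
  cases m with
  | zero => exact subset_rfl
  | succ m => exact fun X hX => hX.1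

/-- Closure of `S²` under finite nonempty intersections. -/
lemma CL2 (F : Finset (Set V)) (hne : F.Nonempty)
    (hsub : ∀ X ∈ F, X ∈ S2set s t v1 vi vj) :
    ⋂₀ (↑F : Set (Set V)) ∈ S2set s t v1 vi vj := by
  revert hsub
  induction hne using Finset.Nonempty.cons_induction with
  | singleton a =>
    intro hsub
    rw [Finset.coe_singleton, sInter_singleton]
    exact hsub a (Finset.mem_singleton_self a)
  | cons a F' ha hne ih =>
    intro hsub
    rw [Finset.coe_cons, sInter_insert]
    have hJ := ih (fun X hX => hsub X (by simp [hX]))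
    have haS : a ∈ S2set s t v1 vi vj := hsub a (by simp)
    by_cases h1 : a ⊆ ⋂₀ (↑F' : Set (Set V))
    · rw [inter_eq_left.mpr h1]; exact haS
    · by_cases h2 : ⋂₀ (↑F' : Set (Set V)) ⊆ a
      · rw [inter_eq_right.mpr h2]; exact hJ
      · exact uncross2 haS hJ h1 h2

/-- A nonempty finite family of 2-tails strictly containing `W` and free from `W`
has intersection strictly containing `W`. -/
lemma FIN (W : Set V) (hWne : W.Nonempty) (F : Finset (Set V)) (hne : F.Nonempty)
    (h : ∀ X ∈ F, X ∈ S2set s t v1 vi vj ∧ W ⊂ X ∧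
      TermPts s t W ∩ TermPts s t X = ∅) :
    W ⊂ ⋂₀ (↑F : Set (Set V)) := by
  revert h
  induction hne using Finset.Nonempty.cons_induction with
  | singleton a =>
    intro h
    rw [Finset.coe_singleton, sInter_singleton]
    exact (h a (Finset.mem_singleton_self a)).2.1
  | cons a F' ha hne ih =>
    intro h
    rw [Finset.coe_cons, sInter_insert]
    have hJ : W ⊂ ⋂₀ (↑F' : Set (Set V)) := ih (fun X hX => h X (by simp [hX]))
    have hJS : ⋂₀ (↑F' : Set (Set V)) ∈ S2set s t v1 vi vj :=
      CL2 F' hne (fun X hX => (h X (by simp [hX])).1)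
    obtain ⟨haS, haW, hafree⟩ := h a (by simp)
    have hsub : W ⊆ a ∩ ⋂₀ (↑F' : Set (Set V)) :=
      fun x hx => ⟨haW.1 hx, hJ.1 hx⟩
    refine ssubset_of_subset_of_ne hsub ?_
    intro heq
    by_cases hJa : ⋂₀ (↑F' : Set (Set V)) ⊆ a
    · rw [inter_eq_right.mpr hJa] at heq
      exact (ne_of_ssubset hJ) heq
    · obtain ⟨y0, hy0J, hy0a⟩ := Set.not_subset.mp hJa
      obtain ⟨x0, hx0⟩ := hWne
      have hx0aJ : x0 ∈ a ∩ ⋂₀ (↑F' : Set (Set V)) := heq ▸ hx0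
      obtain ⟨e, he⟩ := lemE (S := ⋂₀ (↑F' : Set (Set V)))
        (U := a ∩ ⋂₀ (↑F' : Set (Set V))) hJS.1.2.1 hx0aJ.2 hx0aJ hy0J
        (fun hc => hy0a hc.1)
      have hcon : e ∈ TermPts s t W ∩ TermPts s t a := by
        rcases he with ⟨⟨hsJ, hsaJ⟩, htJ, htaJ⟩ | ⟨⟨hsJ, hsaJ⟩, htJ, htaJ⟩
        · have hsW : s e ∈ W := by rw [heq]; exact hsaJ
          have hta : t e ∉ a := fun hc => htaJ ⟨hc, htJ⟩
          have htW : t e ∉ W := fun hc => hta (heq ▸ hc : t e ∈ a ∩ _).1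
          exact ⟨Or.inl ⟨hsW, htW⟩, Or.inl ⟨hsaJ.1, hta⟩⟩
        · have htW : t e ∈ W := by rw [heq]; exact htaJ
          have hsa : s e ∉ a := fun hc => hsaJ ⟨hc, hsJ⟩
          have hsW : s e ∉ W := fun hc => hsa (heq ▸ hc : s e ∈ a ∩ _).1
          exact ⟨Or.inr ⟨htW, hsW⟩, Or.inr ⟨htaJ.1, hsa⟩⟩
      rw [hafree] at hcon
      exact hcon

/-- Key lemma: a 2-tail free from all members of `T²` belongs to `T²`. -/
lemma Lstar (I : Set V) (hI : I ∈ S2set s t v1 vi vj)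
    (hfree : ∀ W' ∈ T2set s t v1 vi vj, TermPts s t W' ∩ TermPts s t I = ∅) :
    I ∈ T2set s t v1 vi vj := by
  have hvi : ∀ m, vi ∈ ⋂₀ Tlevel s t (S2set s t v1 vi vj) m :=
    fun m => mem_sInter.mpr (fun X hX => (Tlevel_subset _ m hX).2.2.1)
  suffices h : ∀ n m, (Tlevel s t (S2set s t v1 vi vj) m).Nonempty →
      ⋂₀ Tlevel s t (S2set s t v1 vi vj) m ⊆ I →
      (I \ ⋂₀ Tlevel s t (S2set s t v1 vi vj) m).ncard ≤ n →
      I ∈ T2set s t v1 vi vj by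
    exact h _ 0 ⟨I, hI⟩ (sInter_subset_of_mem hI) le_rfl
  intro n
  induction n with
  | zero =>
    intro m hne hsub hcard
    have h0 : (I \ ⋂₀ Tlevel s t (S2set s t v1 vi vj) m).ncard = 0 := Nat.le_zero.mp hcard
    rw [Set.ncard_eq_zero] at h0
    exact ⟨m, hne, subset_antisymm (diff_eq_empty.mp h0) hsub⟩
  | succ n ih =>
    intro m hne hsub hcard
    by_cases heq : ⋂₀ Tlevel s t (S2set s t v1 vi vj) m = I
    · exact ⟨m, hne, heq.symm⟩
    · have hWmT2 : ⋂₀ Tlevel s t (S2set s t v1 vi vj) m ∈ T2set s t v1 vi vj :=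
        ⟨m, hne, rfl⟩
      have hfreeWm := hfree _ hWmT2
      have hss : ⋂₀ Tlevel s t (S2set s t v1 vi vj) m ⊂ I :=
        ssubset_of_subset_of_ne hsub heq
      have hIlev : I ∈ Tlevel s t (S2set s t v1 vi vj) (m + 1) := ⟨hI, hss, hfreeWm⟩
      have hne' : (Tlevel s t (S2set s t v1 vi vj) (m + 1)).Nonempty := ⟨I, hIlev⟩
      have hfin : (Tlevel s t (S2set s t v1 vi vj) (m + 1)).Finite := Set.toFinite _
      have hFne : hfin.toFinset.Nonempty := by
        rwa [Set.Finite.toFinset_nonempty]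
      have hstep := FIN _ ⟨vi, hvi m⟩ hfin.toFinset hFne (fun X hX => by
        rw [Set.Finite.mem_toFinset] at hX
        exact ⟨hX.1, hX.2.1, hX.2.2⟩)
      rw [Set.Finite.coe_toFinset] at hstep
      have hsub' : ⋂₀ Tlevel s t (S2set s t v1 vi vj) (m + 1) ⊆ I :=
        sInter_subset_of_mem hIlev
      have hlt : (I \ ⋂₀ Tlevel s t (S2set s t v1 vi vj) (m + 1)).ncard <
          (I \ ⋂₀ Tlevel s t (S2set s t v1 vi vj) m).ncard := by
        apply Set.ncard_lt_ncard _ (Set.toFinite _)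
        constructor
        · exact diff_subset_diff_right hstep.1
        · intro hcon
          obtain ⟨x, hx1, hx2⟩ := exists_of_ssubset hstep
          exact (hcon ⟨hsub' hx1, hx2⟩).2 hx1
      exact ih (m + 1) hne' hsub' (by omega)

/-- Members of `T²` are genuine 2-tails. -/
lemma T2sub {W : Set V} (hW : W ∈ T2set s t v1 vi vj) : W ∈ S2set s t v1 vi vj := by
  obtain ⟨m, hne, rfl⟩ := hW
  have hfin : (Tlevel s t (S2set s t v1 vi vj) m).Finite := Set.toFinite _
  have h := CL2 hfin.toFinset (by rwa [Set.Finite.toFinset_nonempty])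
    (fun X hX => Tlevel_subset _ m ((Set.Finite.mem_toFinset hfin).mp hX))
  rwa [Set.Finite.coe_toFinset] at h

end Closure
section Regions
set_option linter.unusedSectionVars false
variable {V E : Type} [Fintype V] [Fintype E] {s t : E → V} {v1 vi vj : V}

lemma inter_empty_lem {W₁ W₂ : Set V} (h : W₁ ∩ W₂ = ∅) {v : V}
    (h1 : v ∈ W₁) (h2 : v ∈ W₂) : False := by
  rw [Set.eq_empty_iff_forall_notMem] at h
  exact h v ⟨h1, h2⟩

lemma btw_disj {X Y X' Y' : Set V} (h1 : X ∩ X' = ∅ ∨ Y ∩ Y' = ∅)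
    (h2 : X ∩ Y' = ∅ ∨ Y ∩ X' = ∅) :
    btw s t X Y ∩ btw s t X' Y' = ∅ := by
  rw [Set.eq_empty_iff_forall_notMem]
  rintro e ⟨hA | hA, hB | hB⟩
  · rcases h1 with h | h
    · exact inter_empty_lem h hA.1 hB.1
    · exact inter_empty_lem h hA.2 hB.2
  · rcases h2 with h | h
    · exact inter_empty_lem h hA.1 hB.1
    · exact inter_empty_lem h hA.2 hB.2
  · rcases h2 with h | h
    · exact inter_empty_lem h hA.2 hB.2
    · exact inter_empty_lem h hA.1 hB.1
  · rcases h1 with h | h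
    · exact inter_empty_lem h hA.2 hB.2
    · exact inter_empty_lem h hA.1 hB.1

variable (A B : Set V)

lemma rUP : (A ∩ B) ∩ (A \ B) = ∅ := by
  rw [Set.eq_empty_iff_forall_notMem]; rintro v ⟨⟨_, h2⟩, _, h4⟩; exact h4 h2
lemma rUQ : (A ∩ B) ∩ (B \ A) = ∅ := by
  rw [Set.eq_empty_iff_forall_notMem]; rintro v ⟨⟨h1, _⟩, _, h4⟩; exact h4 h1
lemma rUR : (A ∩ B) ∩ (A ∪ B)ᶜ = ∅ := by
  rw [Set.eq_empty_iff_forall_notMem]; rintro v ⟨⟨h1, _⟩, h3⟩; exact h3 (Or.inl h1)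
lemma rPQ : (A \ B) ∩ (B \ A) = ∅ := by
  rw [Set.eq_empty_iff_forall_notMem]; rintro v ⟨⟨h1, _⟩, _, h4⟩; exact h4 h1
lemma rPR : (A \ B) ∩ (A ∪ B)ᶜ = ∅ := by
  rw [Set.eq_empty_iff_forall_notMem]; rintro v ⟨⟨h1, _⟩, h3⟩; exact h3 (Or.inl h1)
lemma rQR : (B \ A) ∩ (A ∪ B)ᶜ = ∅ := by
  rw [Set.eq_empty_iff_forall_notMem]; rintro v ⟨⟨h1, _⟩, h3⟩; exact h3 (Or.inr h1)

lemma cutA_split :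
    TermPts s t A = btw s t (A ∩ B) (B \ A) ∪ btw s t (A ∩ B) (A ∪ B)ᶜ ∪
      btw s t (A \ B) (B \ A) ∪ btw s t (A \ B) (A ∪ B)ᶜ := by
  ext e
  by_cases hsA : s e ∈ A <;> by_cases hsB : s e ∈ B <;>
    by_cases htA : t e ∈ A <;> by_cases htB : t e ∈ B <;>
    simp [mem_TermPts, mem_btw, mem_union, mem_inter_iff, mem_diff, mem_compl_iff,
      hsA, hsB, htA, htB]

lemma cutB_split :
    TermPts s t B = btw s t (A ∩ B) (A \ B) ∪ btw s t (A ∩ B) (A ∪ B)ᶜ ∪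
      btw s t (A \ B) (B \ A) ∪ btw s t (B \ A) (A ∪ B)ᶜ := by
  ext e
  by_cases hsA : s e ∈ A <;> by_cases hsB : s e ∈ B <;>
    by_cases htA : t e ∈ A <;> by_cases htB : t e ∈ B <;>
    simp [mem_TermPts, mem_btw, mem_union, mem_inter_iff, mem_diff, mem_compl_iff,
      hsA, hsB, htA, htB]

lemma cutI_split :
    TermPts s t (A ∩ B) = btw s t (A ∩ B) (A \ B) ∪ btw s t (A ∩ B) (B \ A) ∪
      btw s t (A ∩ B) (A ∪ B)ᶜ := by
  ext e
  by_cases hsA : s e ∈ A <;> by_cases hsB : s e ∈ B <;>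
    by_cases htA : t e ∈ A <;> by_cases htB : t e ∈ B <;>
    simp [mem_TermPts, mem_btw, mem_union, mem_inter_iff, mem_diff, mem_compl_iff,
      hsA, hsB, htA, htB]

lemma cutJ_split :
    TermPts s t (A ∪ B) = btw s t (A \ B) (A ∪ B)ᶜ ∪ btw s t (B \ A) (A ∪ B)ᶜ ∪
      btw s t (A ∩ B) (A ∪ B)ᶜ := by
  ext e
  by_cases hsA : s e ∈ A <;> by_cases hsB : s e ∈ B <;>
    by_cases htA : t e ∈ A <;> by_cases htB : t e ∈ B <;>
    simp [mem_TermPts, mem_btw, mem_union, mem_inter_iff, mem_diff, mem_compl_iff,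
      hsA, hsB, htA, htB]

lemma ncard3 {a b c : Set E} (dab : a ∩ b = ∅) (dac : a ∩ c = ∅) (dbc : b ∩ c = ∅) :
    (a ∪ b ∪ c).ncard = a.ncard + b.ncard + c.ncard := by
  rw [Set.ncard_union_eq (Set.disjoint_union_left.mpr
      ⟨Set.disjoint_iff_inter_eq_empty.mpr dac, Set.disjoint_iff_inter_eq_empty.mpr dbc⟩),
    Set.ncard_union_eq (Set.disjoint_iff_inter_eq_empty.mpr dab)]

lemma ncard4 {a b c d : Set E} (dab : a ∩ b = ∅) (dac : a ∩ c = ∅) (dad : a ∩ d = ∅)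
    (dbc : b ∩ c = ∅) (dbd : b ∩ d = ∅) (dcd : c ∩ d = ∅) :
    (a ∪ b ∪ c ∪ d).ncard = a.ncard + b.ncard + c.ncard + d.ncard := by
  rw [Set.ncard_union_eq (Set.disjoint_union_left.mpr ⟨Set.disjoint_union_left.mpr
      ⟨Set.disjoint_iff_inter_eq_empty.mpr dad, Set.disjoint_iff_inter_eq_empty.mpr dbd⟩,
      Set.disjoint_iff_inter_eq_empty.mpr dcd⟩), ncard3 dab dac dbc]

end Regions
section Uncross3
set_option linter.unusedSectionVars false
variable {V E : Type} [Fintype V] [Fintype E] {s t : E → V} {v1 vi vj : V}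

lemma connI_via_B {A B : Set V} (hBconn : ConnOn s t B)
    (hone : (btw s t (A ∩ B) (B \ A)).ncard = 1) : ConnOn s t (A ∩ B) := by
  obtain ⟨e0, he0⟩ := Set.ncard_eq_one.mp hone
  refine lemC' hBconn (fun x hx => hx.2) e0 (fun e hsB htB hcr => ?_)
  have hmem : e ∈ btw s t (A ∩ B) (B \ A) := by
    rcases hcr with ⟨h1, h2⟩ | ⟨h1, h2⟩
    · exact Or.inl ⟨h1, ⟨htB, fun hA' => h2 ⟨hA', htB⟩⟩⟩
    · exact Or.inr ⟨⟨hsB, fun hA' => h2 ⟨hA', hsB⟩⟩, h1⟩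
  rw [he0] at hmem; exact hmem

lemma connI_via_A {A B : Set V} (hAconn : ConnOn s t A)
    (hone : (btw s t (A ∩ B) (A \ B)).ncard = 1) : ConnOn s t (A ∩ B) := by
  obtain ⟨e0, he0⟩ := Set.ncard_eq_one.mp hone
  refine lemC' hAconn (fun x hx => hx.1) e0 (fun e hsA htA hcr => ?_)
  have hmem : e ∈ btw s t (A ∩ B) (A \ B) := by
    rcases hcr with ⟨h1, h2⟩ | ⟨h1, h2⟩
    · exact Or.inl ⟨h1, ⟨htA, fun hB' => h2 ⟨htA, hB'⟩⟩⟩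
    · exact Or.inr ⟨⟨hsA, fun hB' => h2 ⟨hsA, hB'⟩⟩, h1⟩
  rw [he0] at hmem; exact hmem

lemma connR_via_Ac {A B : Set V} (hAcc : ConnOn s t Aᶜ)
    (hone : (btw s t (B \ A) (A ∪ B)ᶜ).ncard = 1) : ConnOn s t (A ∪ B)ᶜ := by
  obtain ⟨e0, he0⟩ := Set.ncard_eq_one.mp hone
  refine lemC' hAcc (fun x hx h => hx (Or.inl h)) e0 (fun e hsA htA hcr => ?_)
  have hmem : e ∈ btw s t (B \ A) (A ∪ B)ᶜ := by
    rcases hcr with ⟨h1, h2⟩ | ⟨h1, h2⟩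
    · have htAB : t e ∈ A ∪ B := not_not.mp h2
      have htB : t e ∈ B := by
        rcases htAB with h | h
        · exact absurd h htA
        · exact h
      exact Or.inr ⟨h1, ⟨htB, htA⟩⟩
    · have hsAB : s e ∈ A ∪ B := not_not.mp h2
      have hsB : s e ∈ B := by
        rcases hsAB with h | h
        · exact absurd h hsA
        · exact h
      exact Or.inl ⟨⟨hsB, hsA⟩, h1⟩
  rw [he0] at hmem; exact hmem

/-- Main S3 uncrossing: intersecting crossing free 3-tails gives a free 3-tail. -/
lemma uncross3 {A B : Set V} (hA : A ∈ S3set s t v1 vi vj) (hB : B ∈ S3set s t v1 vi vj)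
    (hAB : ¬ A ⊆ B) (hBA : ¬ B ⊆ A) : A ∩ B ∈ S3set s t v1 vi vj := by
  obtain ⟨⟨⟨hAne, hAnu⟩, hAconn, hAcc⟩, hkA, hviA, hvjA, hv1A, hAfree⟩ := hA
  obtain ⟨⟨⟨hBne, hBnu⟩, hBconn, hBcc⟩, hkB, hviB, hvjB, hv1B, hBfree⟩ := hB
  obtain ⟨p, hpA, hpB⟩ := Set.not_subset.mp hAB
  obtain ⟨q, hqB, hqA⟩ := Set.not_subset.mp hBA
  -- flipped region facts
  have rUP' : (A \ B) ∩ (A ∩ B) = ∅ := by rw [inter_comm]; exact rUP A B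
  have rUQ' : (B \ A) ∩ (A ∩ B) = ∅ := by rw [inter_comm]; exact rUQ A B
  have rUR' : (A ∪ B)ᶜ ∩ (A ∩ B) = ∅ := by rw [inter_comm]; exact rUR A B
  have rPR' : (A ∪ B)ᶜ ∩ (A \ B) = ∅ := by rw [inter_comm]; exact rPR A B
  -- disjointness of the six boundary-edge classes
  have dab : btw s t (A ∩ B) (B \ A) ∩ btw s t (A ∩ B) (A ∪ B)ᶜ = ∅ :=
    btw_disj (Or.inr (rQR A B)) (Or.inl (rUR A B))
  have dac : btw s t (A ∩ B) (B \ A) ∩ btw s t (A \ B) (B \ A) = ∅ :=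
    btw_disj (Or.inl (rUP A B)) (Or.inl (rUQ A B))
  have dad : btw s t (A ∩ B) (B \ A) ∩ btw s t (A \ B) (A ∪ B)ᶜ = ∅ :=
    btw_disj (Or.inl (rUP A B)) (Or.inl (rUR A B))
  have dbc : btw s t (A ∩ B) (A ∪ B)ᶜ ∩ btw s t (A \ B) (B \ A) = ∅ :=
    btw_disj (Or.inl (rUP A B)) (Or.inl (rUQ A B))
  have dbd : btw s t (A ∩ B) (A ∪ B)ᶜ ∩ btw s t (A \ B) (A ∪ B)ᶜ = ∅ :=
    btw_disj (Or.inl (rUP A B)) (Or.inr rPR')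
  have dcd : btw s t (A \ B) (B \ A) ∩ btw s t (A \ B) (A ∪ B)ᶜ = ∅ :=
    btw_disj (Or.inr (rQR A B)) (Or.inl (rPR A B))
  have d'ab : btw s t (A ∩ B) (A \ B) ∩ btw s t (A ∩ B) (A ∪ B)ᶜ = ∅ :=
    btw_disj (Or.inr (rPR A B)) (Or.inl (rUR A B))
  have d'ac : btw s t (A ∩ B) (A \ B) ∩ btw s t (A \ B) (B \ A) = ∅ :=
    btw_disj (Or.inl (rUP A B)) (Or.inl (rUQ A B))
  have d'ad : btw s t (A ∩ B) (A \ B) ∩ btw s t (B \ A) (A ∪ B)ᶜ = ∅ :=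
    btw_disj (Or.inl (rUQ A B)) (Or.inl (rUR A B))
  have d'cd : btw s t (A \ B) (B \ A) ∩ btw s t (B \ A) (A ∪ B)ᶜ = ∅ :=
    btw_disj (Or.inl (rPQ A B)) (Or.inl (rPR A B))
  have d'bd : btw s t (A ∩ B) (A ∪ B)ᶜ ∩ btw s t (B \ A) (A ∪ B)ᶜ = ∅ :=
    btw_disj (Or.inl (rUQ A B)) (Or.inl (rUR A B))
  have dIab : btw s t (A ∩ B) (A \ B) ∩ btw s t (A ∩ B) (B \ A) = ∅ :=
    btw_disj (Or.inr (rPQ A B)) (Or.inl (rUQ A B))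
  have dJab : btw s t (A \ B) (A ∪ B)ᶜ ∩ btw s t (B \ A) (A ∪ B)ᶜ = ∅ :=
    btw_disj (Or.inl (rPQ A B)) (Or.inl (rPR A B))
  have dJac : btw s t (A \ B) (A ∪ B)ᶜ ∩ btw s t (A ∩ B) (A ∪ B)ᶜ = ∅ :=
    btw_disj (Or.inl rUP') (Or.inr rUR')
  have dJbc : btw s t (B \ A) (A ∪ B)ᶜ ∩ btw s t (A ∩ B) (A ∪ B)ᶜ = ∅ :=
    btw_disj (Or.inl rUQ') (Or.inr rUR')
  -- subsets of the cuts
  have hUQ_A : btw s t (A ∩ B) (B \ A) ⊆ TermPts s t A :=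
    btw_subset_TermPts (fun x hx => hx.1) (fun y hy => hy.2)
  have hUR_A : btw s t (A ∩ B) (A ∪ B)ᶜ ⊆ TermPts s t A :=
    btw_subset_TermPts (fun x hx => hx.1) (fun y hy h => hy (Or.inl h))
  have hPR_A : btw s t (A \ B) (A ∪ B)ᶜ ⊆ TermPts s t A :=
    btw_subset_TermPts (fun x hx => hx.1) (fun y hy h => hy (Or.inl h))
  have hUP_B : btw s t (A ∩ B) (A \ B) ⊆ TermPts s t B :=
    btw_subset_TermPts (fun x hx => hx.2) (fun y hy => hy.2)
  have hQR_B : btw s t (B \ A) (A ∪ B)ᶜ ⊆ TermPts s t B :=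
    btw_subset_TermPts (fun x hx => hx.1) (fun y hy h => hy (Or.inr h))
  -- nonemptiness of the four key classes
  have hEUPne : (btw s t (A ∩ B) (A \ B)).Nonempty := by
    obtain ⟨e, he⟩ := lemE (S := A) (U := A ∩ B) hAconn hviA ⟨hviA, hviB⟩ hpA
      (fun h => hpB h.2)
    have hsub : A \ (A ∩ B) ⊆ A \ B := fun x hx => ⟨hx.1, fun h => hx.2 ⟨hx.1, h⟩⟩
    exact ⟨e, btw_mono (fun x hx => hx.2) hsub he⟩
  have hEUQne : (btw s t (A ∩ B) (B \ A)).Nonempty := by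
    obtain ⟨e, he⟩ := lemE (S := B) (U := A ∩ B) hBconn hviB ⟨hviA, hviB⟩ hqB
      (fun h => hqA h.1)
    have hsub : B \ (A ∩ B) ⊆ B \ A := fun x hx => ⟨hx.1, fun h => hx.2 ⟨h, hx.1⟩⟩
    exact ⟨e, btw_mono (fun x hx => hx.2) hsub he⟩
  have hEPRne : (btw s t (A \ B) (A ∪ B)ᶜ).Nonempty := by
    obtain ⟨e, he⟩ := lemE (S := Bᶜ) (U := A \ B) hBcc hpB ⟨hpA, hpB⟩ hv1B
      (fun h => hv1A h.1)
    refine ⟨e, btw_mono (fun x hx => hx.2) (fun x hx => ?_) he⟩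
    rcases hx with ⟨hx1, hx2⟩
    rintro (h | h)
    · exact hx2 ⟨h, hx1⟩
    · exact hx1 h
  have hEQRne : (btw s t (B \ A) (A ∪ B)ᶜ).Nonempty := by
    obtain ⟨e, he⟩ := lemE (S := Aᶜ) (U := B \ A) hAcc hqA ⟨hqB, hqA⟩ hv1A
      (fun h => hv1B h.1)
    refine ⟨e, btw_mono (fun x hx => hx.2) (fun x hx => ?_) he⟩
    rcases hx with ⟨hx1, hx2⟩
    rintro (h | h)
    · exact hx1 h
    · exact hx2 ⟨h, hx1⟩
  have pUP : 1 ≤ (btw s t (A ∩ B) (A \ B)).ncard :=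
    (Set.ncard_pos (Set.toFinite _)).mpr hEUPne
  have pUQ : 1 ≤ (btw s t (A ∩ B) (B \ A)).ncard :=
    (Set.ncard_pos (Set.toFinite _)).mpr hEUQne
  have pPR : 1 ≤ (btw s t (A \ B) (A ∪ B)ᶜ).ncard :=
    (Set.ncard_pos (Set.toFinite _)).mpr hEPRne
  have pQR : 1 ≤ (btw s t (B \ A) (A ∪ B)ᶜ).ncard :=
    (Set.ncard_pos (Set.toFinite _)).mpr hEQRne
  -- the counting identities
  have hkA' : (TermPts s t A).ncard = 3 := hkA
  have hkB' : (TermPts s t B).ncard = 3 := hkB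
  have h3A : (btw s t (A ∩ B) (B \ A)).ncard + (btw s t (A ∩ B) (A ∪ B)ᶜ).ncard +
      (btw s t (A \ B) (B \ A)).ncard + (btw s t (A \ B) (A ∪ B)ᶜ).ncard = 3 := by
    rw [← ncard4 dab dac dad dbc dbd dcd, ← cutA_split A B]; exact hkA'
  have h3B : (btw s t (A ∩ B) (A \ B)).ncard + (btw s t (A ∩ B) (A ∪ B)ᶜ).ncard +
      (btw s t (A \ B) (B \ A)).ncard + (btw s t (B \ A) (A ∪ B)ᶜ).ncard = 3 := by
    rw [← ncard4 d'ab d'ac d'ad dbc d'bd d'cd, ← cutB_split A B]; exact hkB'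
  have hkIeq : (TermPts s t (A ∩ B)).ncard = (btw s t (A ∩ B) (A \ B)).ncard +
      (btw s t (A ∩ B) (B \ A)).ncard + (btw s t (A ∩ B) (A ∪ B)ᶜ).ncard := by
    rw [cutI_split A B, ncard3 dIab d'ab dab]
  have hkJeq : (TermPts s t (A ∪ B)).ncard = (btw s t (A \ B) (A ∪ B)ᶜ).ncard +
      (btw s t (B \ A) (A ∪ B)ᶜ).ncard + (btw s t (A ∩ B) (A ∪ B)ᶜ).ncard := by
    rw [cutJ_split A B, ncard3 dJab dJac dJbc]
  -- freeness of the intersection from all of T², and of the union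
  have hIfree : ∀ W' ∈ T2set s t v1 vi vj, TermPts s t W' ∩ TermPts s t (A ∩ B) = ∅ := by
    intro W' hW'
    rw [Set.eq_empty_iff_forall_notMem]
    rintro e ⟨he1, he2⟩
    rw [cutI_split A B] at he2
    have hAf := hAfree W' hW'
    have hBf := hBfree W' hW'
    rcases he2 with (he2 | he2) | he2
    · exact inter_empty_lem hBf (hUP_B he2) he1
    · exact inter_empty_lem hAf (hUQ_A he2) he1
    · exact inter_empty_lem hAf (hUR_A he2) he1
  have hInu : A ∩ B ≠ univ := by
    intro h
    have : v1 ∈ A ∩ B := h.symm ▸ mem_univ v1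
    exact hv1A this.1
  have hIcc : ConnOn s t (A ∩ B)ᶜ := by
    rw [Set.compl_inter]
    exact lemUnion hAcc hBcc (x0 := v1) ⟨hv1A, hv1B⟩
  -- case analysis on the size of the cut of the intersection
  have hcase : (TermPts s t (A ∩ B)).ncard = 2 ∨ (TermPts s t (A ∩ B)).ncard = 3 ∨
      (TermPts s t (A ∩ B)).ncard = 4 := by omega
  rcases hcase with hc2 | hc3 | hc4
  · -- cut 2 : the intersection is a 2-tail free from all of T², contradiction via Lstar
    have hna1 : (btw s t (A ∩ B) (B \ A)).ncard = 1 := by omega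
    have hIconn : ConnOn s t (A ∩ B) := connI_via_B hBconn hna1
    have hIS2 : A ∩ B ∈ S2set s t v1 vi vj :=
      ⟨⟨⟨⟨vi, hviA, hviB⟩, hInu⟩, hIconn, hIcc⟩, hc2, ⟨hviA, hviB⟩, ⟨hvjA, hvjB⟩,
        fun h => hv1A h.1⟩
    have hIT2 := Lstar _ hIS2 hIfree
    have hAfI := hAfree _ hIT2
    obtain ⟨e, he⟩ := hEUQne
    have hcon : e ∈ TermPts s t A ∩ TermPts s t (A ∩ B) :=
      ⟨hUQ_A he, by rw [cutI_split A B]; exact Or.inl (Or.inr he)⟩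
    rw [hAfI] at hcon
    exact absurd hcon (Set.notMem_empty e)
  · -- cut 3 : the intersection is a genuine member of S³
    have hconn : ConnOn s t (A ∩ B) := by
      have h1 : (btw s t (A ∩ B) (B \ A)).ncard = 1 ∨
          (btw s t (A ∩ B) (A \ B)).ncard = 1 := by omega
      rcases h1 with h1 | h1
      · exact connI_via_B hBconn h1
      · exact connI_via_A hAconn h1
    refine ⟨⟨⟨⟨vi, hviA, hviB⟩, hInu⟩, hconn, hIcc⟩, hc3, ⟨hviA, hviB⟩, ⟨hvjA, hvjB⟩,
      fun h => hv1A h.1, fun W hW => ?_⟩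
    rw [FreePair, inter_comm]
    exact hIfree W hW
  · -- cut 4 : the union is a 2-tail free from all of T², contradiction via Lstar
    have hnf1 : (btw s t (B \ A) (A ∪ B)ᶜ).ncard = 1 := by omega
    have hkJ2 : (TermPts s t (A ∪ B)).ncard = 2 := by omega
    have hJconn : ConnOn s t (A ∪ B) := lemUnion hAconn hBconn ⟨hviA, hviB⟩
    have hJcc : ConnOn s t (A ∪ B)ᶜ := connR_via_Ac hAcc hnf1
    have hJnu : A ∪ B ≠ univ := by
      intro h
      have : v1 ∈ A ∪ B := h.symm ▸ mem_univ v1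
      rcases this with h' | h'
      · exact hv1A h'
      · exact hv1B h'
    have hJfree : ∀ W' ∈ T2set s t v1 vi vj,
        TermPts s t W' ∩ TermPts s t (A ∪ B) = ∅ := by
      intro W' hW'
      rw [Set.eq_empty_iff_forall_notMem]
      rintro e ⟨he1, he2⟩
      rw [cutJ_split A B] at he2
      have hAf := hAfree W' hW'
      have hBf := hBfree W' hW'
      rcases he2 with (he2 | he2) | he2
      · exact inter_empty_lem hAf (hPR_A he2) he1
      · exact inter_empty_lem hBf (hQR_B he2) he1
      · exact inter_empty_lem hAf (hUR_A he2) he1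
    have hJS2 : A ∪ B ∈ S2set s t v1 vi vj :=
      ⟨⟨⟨⟨vi, Or.inl hviA⟩, hJnu⟩, hJconn, hJcc⟩, hkJ2, Or.inl hviA, Or.inl hvjA,
        fun h => by rcases h with h' | h'; exacts [hv1A h', hv1B h']⟩
    have hJT2 := Lstar _ hJS2 hJfree
    have hAfJ := hAfree _ hJT2
    obtain ⟨e, he⟩ := hEPRne
    have hcon : e ∈ TermPts s t A ∩ TermPts s t (A ∪ B) :=
      ⟨hPR_A he, by rw [cutJ_split A B]; exact Or.inl (Or.inl he)⟩
    rw [hAfJ] at hcon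
    exact absurd hcon (Set.notMem_empty e)

end Uncross3
section Final
set_option linter.unusedSectionVars false
variable {V E : Type} [Fintype V] [Fintype E] {s t : E → V} {v1 vi vj : V}

/-- Closure of `S³` under finite nonempty intersections. -/
lemma CL3 (F : Finset (Set V)) (hne : F.Nonempty)
    (hsub : ∀ X ∈ F, X ∈ S3set s t v1 vi vj) :
    ⋂₀ (↑F : Set (Set V)) ∈ S3set s t v1 vi vj := by
  revert hsub
  induction hne using Finset.Nonempty.cons_induction with
  | singleton a =>
    intro hsub
    rw [Finset.coe_singleton, sInter_singleton]
    exact hsub a (Finset.mem_singleton_self a)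
  | cons a F' ha hne ih =>
    intro hsub
    rw [Finset.coe_cons, sInter_insert]
    have hJ := ih (fun X hX => hsub X (by simp [hX]))
    have haS : a ∈ S3set s t v1 vi vj := hsub a (by simp)
    by_cases h1 : a ⊆ ⋂₀ (↑F' : Set (Set V))
    · rw [inter_eq_left.mpr h1]; exact haS
    · by_cases h2 : ⋂₀ (↑F' : Set (Set V)) ⊆ a
      · rw [inter_eq_right.mpr h2]; exact hJ
      · exact uncross3 haS hJ h1 h2

/-- Members of `T³` are genuine free 3-tails. -/
lemma T3sub {W : Set V} (hW : W ∈ T3set s t v1 vi vj) : W ∈ S3set s t v1 vi vj := by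
  obtain ⟨m, hne, rfl⟩ := hW
  have hfin : (Tlevel s t (S3set s t v1 vi vj) m).Finite := Set.toFinite _
  have h := CL3 hfin.toFinset (by rwa [Set.Finite.toFinset_nonempty])
    (fun X hX => Tlevel_subset _ m ((Set.Finite.mem_toFinset hfin).mp hX))
  rwa [Set.Finite.coe_toFinset] at h

end Final
/-- Lemma 5.2: for a tail `Z` with `k_Z ≥ 4`, there are no `Z`-terminal tails
`W ∈ T²_{i,j}` and `W' ∈ T³_{i,j}` with `Z ⊆ W ∧ W'` and
`#(Term_{W'} ∩ Term_Z) = 2`. -/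
theorem stmt_15 {V E : Type} [Fintype V] [Fintype E] (s t : E → V)
    (hC : ConnOn s t Set.univ) (v1 vi vj : V) (Z : Set V)
    (hZ : IsTail s t Z) (hk : 4 ≤ kcut s t Z) :
    ¬ ∃ W ∈ T2set s t v1 vi vj, ∃ W' ∈ T3set s t v1 vi vj,
        TermPts s t W ∩ TermPts s t Z ≠ ∅ ∧
        TermPts s t W' ∩ TermPts s t Z ≠ ∅ ∧
        Z ⊆ W ∩ W' ∧
        (TermPts s t W' ∩ TermPts s t Z).ncard = 2 := by
  rintro ⟨W, hWT2, W', hWT3, hAne, -, hZsub, hBcard⟩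
  obtain ⟨⟨⟨hWne, hWnu⟩, hWconn, hWcc⟩, hkW, hviW, hvjW, hv1W⟩ := T2sub hWT2
  obtain ⟨⟨⟨hW'ne, hW'nu⟩, hW'conn, hW'cc⟩, hkW', hviW', hvjW', hv1W', hW'free⟩ :=
    T3sub hWT3
  obtain ⟨⟨hZne, hZnu⟩, hZconn, hZcc⟩ := hZ
  have hk' : 4 ≤ (TermPts s t Z).ncard := hk
  have hkW2 : (TermPts s t W).ncard = 2 := hkW
  have hkW'3 : (TermPts s t W').ncard = 3 := hkW'
  have hfree : TermPts s t W' ∩ TermPts s t W = ∅ := hW'free W hWT2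
  have hZW : Z ⊆ W := fun x hx => (hZsub hx).1
  have hZW' : Z ⊆ W' := fun x hx => (hZsub hx).2
  -- freeness kills the `U-R` and `P-Q` edge classes
  have hUR0 : btw s t (W ∩ W') (W ∪ W')ᶜ = ∅ := by
    rw [Set.eq_empty_iff_forall_notMem]
    intro e he
    have h1 : e ∈ TermPts s t W :=
      btw_subset_TermPts (X := W ∩ W') (Y := (W ∪ W')ᶜ)
        (fun x hx => hx.1) (fun y hy h => hy (Or.inl h)) he
    have h2 : e ∈ TermPts s t W' :=
      btw_subset_TermPts (X := W ∩ W') (Y := (W ∪ W')ᶜ)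
        (fun x hx => hx.2) (fun y hy h => hy (Or.inr h)) he
    exact inter_empty_lem hfree h2 h1
  have hPQ0 : btw s t (W \ W') (W' \ W) = ∅ := by
    rw [Set.eq_empty_iff_forall_notMem]
    intro e he
    have h1 : e ∈ TermPts s t W :=
      btw_subset_TermPts (X := W \ W') (Y := W' \ W)
        (fun x hx => hx.1) (fun y hy => hy.2) he
    have h2 : e ∈ TermPts s t W' :=
      btw_subset_TermPts' (X := W \ W') (Y := W' \ W)
        (fun y hy => hy.1) (fun x hx => hx.2) he
    exact inter_empty_lem hfree h2 h1
  -- the two cut intersections sit inside `U-P` and `U-Q`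
  have hB'sub : TermPts s t W' ∩ TermPts s t Z ⊆ btw s t (W ∩ W') (W \ W') := by
    rintro e ⟨heW', heZ⟩
    rcases heZ with ⟨hsZ, htZ⟩ | ⟨htZ, hsZ⟩
    · have hsU : s e ∈ W ∩ W' := ⟨hZW hsZ, hZW' hsZ⟩
      have htW' : t e ∉ W' := by
        rcases heW' with ⟨_, h⟩ | ⟨h, h'⟩
        · exact h
        · exact absurd hsU.2 h'
      have htW : t e ∈ W := by
        by_contra htW
        exact inter_empty_lem hfree heW' (Or.inl ⟨hsU.1, htW⟩)
      exact Or.inl ⟨hsU, ⟨htW, htW'⟩⟩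
    · have htU : t e ∈ W ∩ W' := ⟨hZW htZ, hZW' htZ⟩
      have hsW' : s e ∉ W' := by
        rcases heW' with ⟨h, h'⟩ | ⟨_, h⟩
        · exact absurd htU.2 (by exact h')
        · exact h
      have hsW : s e ∈ W := by
        by_contra hsW
        exact inter_empty_lem hfree heW' (Or.inr ⟨htU.1, hsW⟩)
      exact Or.inr ⟨⟨hsW, hsW'⟩, htU⟩
  have hA'sub : TermPts s t W ∩ TermPts s t Z ⊆ btw s t (W ∩ W') (W' \ W) := by
    rintro e ⟨heW, heZ⟩
    rcases heZ with ⟨hsZ, htZ⟩ | ⟨htZ, hsZ⟩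
    · have hsU : s e ∈ W ∩ W' := ⟨hZW hsZ, hZW' hsZ⟩
      have htW : t e ∉ W := by
        rcases heW with ⟨_, h⟩ | ⟨h, h'⟩
        · exact h
        · exact absurd hsU.1 h'
      have htW' : t e ∈ W' := by
        by_contra htW'
        exact inter_empty_lem hfree (Or.inl ⟨hsU.2, htW'⟩) heW
      exact Or.inl ⟨hsU, ⟨htW', htW⟩⟩
    · have htU : t e ∈ W ∩ W' := ⟨hZW htZ, hZW' htZ⟩
      have hsW : s e ∉ W := by
        rcases heW with ⟨h, h'⟩ | ⟨_, h⟩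
        · exact absurd htU.1 h'
        · exact h
      have hsW' : s e ∈ W' := by
        by_contra hsW'
        exact inter_empty_lem hfree (Or.inr ⟨htU.2, hsW'⟩) heW
      exact Or.inr ⟨⟨hsW', hsW⟩, htU⟩
  -- counting the cut of W and W'
  have dW : btw s t (W ∩ W') (W' \ W) ∩ btw s t (W \ W') (W ∪ W')ᶜ = ∅ :=
    btw_disj (Or.inl (rUP W W')) (Or.inl (rUR W W'))
  have dW' : btw s t (W ∩ W') (W \ W') ∩ btw s t (W' \ W) (W ∪ W')ᶜ = ∅ :=
    btw_disj (Or.inl (rUQ W W')) (Or.inl (rUR W W'))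
  have h2W : (btw s t (W ∩ W') (W' \ W)).ncard +
      (btw s t (W \ W') (W ∪ W')ᶜ).ncard = 2 := by
    have hsplit := cutA_split (s := s) (t := t) W W'
    rw [hUR0, hPQ0, union_empty, union_empty] at hsplit
    rw [← Set.ncard_union_eq (Set.disjoint_iff_inter_eq_empty.mpr dW), ← hsplit]
    exact hkW2
  have h3W' : (btw s t (W ∩ W') (W \ W')).ncard +
      (btw s t (W' \ W) (W ∪ W')ᶜ).ncard = 3 := by
    have hsplit := cutB_split (s := s) (t := t) W W'
    rw [hUR0, hPQ0, union_empty, union_empty] at hsplit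
    rw [← Set.ncard_union_eq (Set.disjoint_iff_inter_eq_empty.mpr dW'), ← hsplit]
    exact hkW'3
  have hv1R : v1 ∉ W ∪ W' := by rintro (h | h); exacts [hv1W h, hv1W' h]
  -- the `Q-R` class is nonempty (else Wᶜ is disconnected)
  obtain ⟨e0, he0A⟩ := nonempty_iff_ne_empty.mpr hAne
  have he0Q := hA'sub he0A
  have hQne : ∃ x, x ∈ W' \ W := by
    rcases he0Q with ⟨_, h⟩ | ⟨h, _⟩
    · exact ⟨t e0, h⟩
    · exact ⟨s e0, h⟩
  have hQRne : (btw s t (W' \ W) (W ∪ W')ᶜ).Nonempty := by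
    obtain ⟨q0, hq0⟩ := hQne
    obtain ⟨e, he⟩ := lemE (S := Wᶜ) (U := W' \ W) hWcc hq0.2 hq0 hv1W
      (fun h => hv1W' h.1)
    refine ⟨e, btw_mono (fun x hx => hx.2) (fun x hx => ?_) he⟩
    rcases hx with ⟨hx1, hx2⟩
    rintro (h | h)
    · exact hx1 h
    · exact hx2 ⟨h, hx1⟩
  have hQRpos : 1 ≤ (btw s t (W' \ W) (W ∪ W')ᶜ).ncard :=
    (Set.ncard_pos (Set.toFinite _)).mpr hQRne
  -- hence all `U-P` edges are cut edges of Z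
  have hUP2 : (btw s t (W ∩ W') (W \ W')).ncard ≤ 2 := by omega
  have hUPeq : TermPts s t W' ∩ TermPts s t Z = btw s t (W ∩ W') (W \ W') :=
    Set.eq_of_subset_of_ncard_le hB'sub (by rw [hBcard]; exact hUP2)
  -- the `P-R` class is nonempty (else W'ᶜ is disconnected)
  have hPne : ∃ x, x ∈ W \ W' := by
    obtain ⟨e, he⟩ := Set.nonempty_of_ncard_ne_zero (s := TermPts s t W' ∩ TermPts s t Z)
      (by rw [hBcard]; omega)
    have := hB'sub he
    rcases this with ⟨_, h⟩ | ⟨h, _⟩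
    · exact ⟨t e, h⟩
    · exact ⟨s e, h⟩
  have hPRne : (btw s t (W \ W') (W ∪ W')ᶜ).Nonempty := by
    obtain ⟨p0, hp0⟩ := hPne
    obtain ⟨e, he⟩ := lemE (S := W'ᶜ) (U := W \ W') hW'cc hp0.2 hp0 hv1W'
      (fun h => hv1W h.1)
    refine ⟨e, btw_mono (fun x hx => hx.2) (fun x hx => ?_) he⟩
    rcases hx with ⟨hx1, hx2⟩
    rintro (h | h)
    · exact hx2 ⟨h, hx1⟩
    · exact hx1 h
  have hPRpos : 1 ≤ (btw s t (W \ W') (W ∪ W')ᶜ).ncard :=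
    (Set.ncard_pos (Set.toFinite _)).mpr hPRne
  have hUQ1 : (btw s t (W ∩ W') (W' \ W)).ncard ≤ 1 := by omega
  have hA'pos : 1 ≤ (TermPts s t W ∩ TermPts s t Z).ncard :=
    (Set.ncard_pos (Set.toFinite _)).mpr ⟨e0, he0A⟩
  have hUQeq : TermPts s t W ∩ TermPts s t Z = btw s t (W ∩ W') (W' \ W) :=
    Set.eq_of_subset_of_ncard_le hA'sub (by omega)
  have hA'card1 : (TermPts s t W ∩ TermPts s t Z).ncard = 1 := by
    have hUQpos : 1 ≤ (btw s t (W ∩ W') (W' \ W)).ncard := hUQeq ▸ hA'pos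
    rw [hUQeq]; omega
  -- there is a cut edge of Z not in either intersection
  have hdAB : (TermPts s t W ∩ TermPts s t Z) ∩ (TermPts s t W' ∩ TermPts s t Z) = ∅ := by
    rw [Set.eq_empty_iff_forall_notMem]
    rintro e ⟨⟨h1, _⟩, ⟨h2, _⟩⟩
    exact inter_empty_lem hfree h2 h1
  have hcardsum : ((TermPts s t W ∩ TermPts s t Z) ∪
      (TermPts s t W' ∩ TermPts s t Z)).ncard = 3 := by
    rw [Set.ncard_union_eq (Set.disjoint_iff_inter_eq_empty.mpr hdAB), hBcard, hA'card1]
  have hnotsub : ¬ (TermPts s t Z ⊆ (TermPts s t W ∩ TermPts s t Z) ∪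
      (TermPts s t W' ∩ TermPts s t Z)) := by
    intro hcon
    have hle := Set.ncard_le_ncard hcon (Set.toFinite _)
    rw [hcardsum] at hle
    omega
  obtain ⟨e3, he3Z, he3AB⟩ := Set.not_subset.mp hnotsub
  -- its non-Z endpoint lies in (W ∩ W') \ Z
  have hy3 : ∃ y, y ∈ (W ∩ W') \ Z := by
    rcases he3Z with ⟨hsZ, htZ⟩ | ⟨htZ, hsZ⟩
    · refine ⟨t e3, ⟨⟨?_, ?_⟩, htZ⟩⟩
      · by_contra hc
        exact he3AB (Or.inl ⟨Or.inl ⟨hZW hsZ, hc⟩, Or.inl ⟨hsZ, htZ⟩⟩)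
      · by_contra hc
        exact he3AB (Or.inr ⟨Or.inl ⟨hZW' hsZ, hc⟩, Or.inl ⟨hsZ, htZ⟩⟩)
    · refine ⟨s e3, ⟨⟨?_, ?_⟩, hsZ⟩⟩
      · by_contra hc
        exact he3AB (Or.inl ⟨Or.inr ⟨hZW htZ, hc⟩, Or.inr ⟨htZ, hsZ⟩⟩)
      · by_contra hc
        exact he3AB (Or.inr ⟨Or.inr ⟨hZW' htZ, hc⟩, Or.inr ⟨htZ, hsZ⟩⟩)
  obtain ⟨y3, hy3U, hy3Z⟩ := hy3
  -- final disconnection of Zᶜ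
  have hv1Z : v1 ∉ Z := fun h => hv1W (hZW h)
  obtain ⟨e4, he4⟩ := lemE (S := Zᶜ) (U := (W ∩ W') \ Z) hZcc hy3Z ⟨hy3U, hy3Z⟩
    hv1Z (fun h => hv1R (Or.inl h.1.1))
  -- both endpoints of e4 avoid Z, one is in (W∩W')\Z, the other outside W∩W'
  have he4' : (s e4 ∉ Z ∧ t e4 ∉ Z) ∧
      ((s e4 ∈ W ∩ W' ∧ t e4 ∉ W ∩ W') ∨ (t e4 ∈ W ∩ W' ∧ s e4 ∉ W ∩ W')) := by
    rcases he4 with ⟨⟨hs1, hs2⟩, ht1, ht2⟩ | ⟨⟨hs1, hs2⟩, ht1, ht2⟩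
    · exact ⟨⟨hs1, ht1⟩, Or.inl ⟨hs2.1, fun hc => ht2 ⟨hc, ht1⟩⟩⟩
    · exact ⟨⟨hs1, ht1⟩, Or.inr ⟨ht2.1, fun hc => hs2 ⟨hc, hs1⟩⟩⟩
  obtain ⟨⟨hs4Z, ht4Z⟩, he4cr⟩ := he4'
  -- e4 crosses W∩W', so it lies in one of the three classes; each is impossible
  have he4cut : e4 ∈ btw s t (W ∩ W') (W \ W') ∨ e4 ∈ btw s t (W ∩ W') (W' \ W) ∨
      e4 ∈ btw s t (W ∩ W') (W ∪ W')ᶜ := by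
    have : e4 ∈ TermPts s t (W ∩ W') := by
      rcases he4cr with ⟨h1, h2⟩ | ⟨h1, h2⟩
      · exact Or.inl ⟨h1, h2⟩
      · exact Or.inr ⟨h1, h2⟩
    rw [cutI_split W W'] at this
    rcases this with (h | h) | h
    · exact Or.inl h
    · exact Or.inr (Or.inl h)
    · exact Or.inr (Or.inr h)
  rcases he4cut with h | h | h
  · rw [← hUPeq] at h
    rcases h.2 with ⟨h', _⟩ | ⟨h', _⟩
    · exact hs4Z h'
    · exact ht4Z h'
  · rw [← hUQeq] at h
    rcases h.2 with ⟨h', _⟩ | ⟨h', _⟩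
    · exact hs4Z h'
    · exact ht4Z h'
  · rw [hUR0] at h
    exact h
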